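/- For every natural number n, the hyperoctahedral group H_{n+1} (the group of signed permutations of Fin (n+1)) is already generated by the block-flip elements whose middle block has size at most one: Subgroup.closure {w_{p,q,r} : p + q + r = n + 1 and q ≤ 1} = ⊤. -/

import Mathlib

/-- The action of permutations on sign vectors, permuting the coordinates. -/
def signPermAction (m : ℕ) :
    Equiv.Perm (Fin m) →* MulAut (Fin m → Multiplicative (ZMod 2)) where
  toFun σ := MulEquiv.arrowCongr σ (MulEquiv.refl (Multiplicative (ZMod 2)))
  map_one' := by ext f i; rfl
  map_mul' σ τ := by ext f i; rfl

/-- The hyperoctahedral group `H_{n+1} = C₂^{n+1} ⋊ Σ_{n+1}`, realized as the group of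
signed permutations of `Fin (n+1)`. -/
abbrev HyperoctahedralGroup (n : ℕ) : Type :=
  (Fin (n + 1) → Multiplicative (ZMod 2)) ⋊[signPermAction (n + 1)] Equiv.Perm (Fin (n + 1))

/-- The underlying permutation of the block-flip element `w_{p,q,r}`: the first block of
size `p` moves to the end, the middle block of size `q` is reversed, and the last block of
size `r` moves to the front. -/
def blockFlipPerm (n p q r : ℕ) (h : p + q + r = n + 1) : Equiv.Perm (Fin (n + 1)) :=
  (finCongr h.symm).trans <|
    (finSumFinEquiv (m := p + q) (n := r)).symm.trans <|
      ((finSumFinEquiv (m := p) (n := q)).symm.sumCongr (Equiv.refl (Fin r))).trans <|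
        (Equiv.sumComm (Fin p ⊕ Fin q) (Fin r)).trans <|
          ((Equiv.refl (Fin r)).sumCongr
              (((Equiv.refl (Fin p)).sumCongr (Fin.revPerm (n := q))).trans
                (Equiv.sumComm (Fin p) (Fin q)))).trans <|
            ((Equiv.refl (Fin r)).sumCongr (finSumFinEquiv (m := q) (n := p))).trans <|
              (finSumFinEquiv (m := r) (n := q + p)).trans
                (finCongr (by omega : r + (q + p) = n + 1))

/-- The block-flip element `w_{p,q,r}` of the hyperoctahedral group: its sign component is
nontrivial exactly at the `q` middle-block positions `p, …, p + q - 1`, and its underlying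
permutation is `blockFlipPerm`. -/
def blockFlip (n p q r : ℕ) (h : p + q + r = n + 1) : HyperoctahedralGroup n :=
  ⟨fun i => if p ≤ (i : ℕ) ∧ (i : ℕ) < p + q then Multiplicative.ofAdd (1 : ZMod 2) else 1,
    blockFlipPerm n p q r h⟩

set_option linter.unnecessarySeqFocus false

theorem blockFlipPerm_apply_val (n p q r : ℕ) (h : p + q + r = n + 1) (i : Fin (n + 1)) :
    (blockFlipPerm n p q r h i : ℕ) =
      if (i : ℕ) < p then r + q + (i : ℕ)
      else if (i : ℕ) < p + q then r + (p + q - 1 - (i : ℕ))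
      else (i : ℕ) - (p + q) := by
  unfold blockFlipPerm
  rcases Nat.lt_or_ge (i : ℕ) (p + q) with hpq | hpq
  · have e1 : finCongr h.symm i = Fin.castAdd r (⟨(i:ℕ), hpq⟩ : Fin (p + q)) := by
      simp [Fin.ext_iff]
    rw [Equiv.trans_apply, e1, Equiv.trans_apply, finSumFinEquiv_symm_apply_castAdd]
    rcases Nat.lt_or_ge (i : ℕ) p with hp | hp
    · have e2 : (finSumFinEquiv.symm (⟨(i:ℕ), hpq⟩ : Fin (p + q)) : Fin p ⊕ Fin q)
          = Sum.inl ⟨(i:ℕ), hp⟩ := by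
        rw [Equiv.symm_apply_eq]; simp [Fin.ext_iff]
      simp only [Equiv.trans_apply, Equiv.sumCongr_apply, e2, Sum.map_inl, Sum.map_inr,
        Equiv.sumComm_apply, Sum.swap_inl, Sum.swap_inr, Equiv.refl_apply,
        finSumFinEquiv_apply_left, finSumFinEquiv_apply_right, finCongr_apply,
        Fin.coe_cast, Fin.coe_castAdd, Fin.coe_natAdd]
      split_ifs <;> omega
    · have e2 : (finSumFinEquiv.symm (⟨(i:ℕ), hpq⟩ : Fin (p + q)) : Fin p ⊕ Fin q)
          = Sum.inr ⟨(i:ℕ) - p, by omega⟩ := by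
        rw [Equiv.symm_apply_eq]; simp [Fin.ext_iff]; omega
      simp only [Equiv.trans_apply, Equiv.sumCongr_apply, e2, Sum.map_inl, Sum.map_inr,
        Equiv.sumComm_apply, Sum.swap_inl, Sum.swap_inr, Equiv.refl_apply,
        finSumFinEquiv_apply_left, finSumFinEquiv_apply_right, finCongr_apply,
        Fin.revPerm_apply, Fin.val_rev,
        Fin.coe_cast, Fin.coe_castAdd, Fin.coe_natAdd]
      split_ifs <;> omega
  · have e1 : finCongr h.symm i = Fin.natAdd (p+q) (⟨(i:ℕ) - (p+q), by omega⟩ : Fin r) := by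
      simp [Fin.ext_iff]; omega
    rw [Equiv.trans_apply, e1, Equiv.trans_apply, finSumFinEquiv_symm_apply_natAdd]
    simp only [Equiv.trans_apply, Equiv.sumCongr_apply, Sum.map_inl, Sum.map_inr,
      Equiv.sumComm_apply, Sum.swap_inl, Sum.swap_inr, Equiv.refl_apply,
      finSumFinEquiv_apply_left, finSumFinEquiv_apply_right, finCongr_apply,
      Fin.coe_cast, Fin.coe_castAdd, Fin.coe_natAdd]
    split_ifs <;> omega

theorem blockFlipPerm_rot (n : ℕ) (h : n + 0 + 1 = n + 1) :
    blockFlipPerm n n 0 1 h = finRotate (n + 1) := by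
  ext i
  rw [blockFlipPerm_apply_val, finRotate_succ_apply, Fin.val_add_one]
  have := i.isLt
  simp only [Fin.ext_iff, Fin.val_last]; split_ifs <;> omega

theorem blockFlipPerm_rot' (n : ℕ) (h : n + 1 + 0 = n + 1) :
    blockFlipPerm n n 1 0 h = finRotate (n + 1) := by
  ext i
  rw [blockFlipPerm_apply_val, finRotate_succ_apply, Fin.val_add_one]
  have := i.isLt
  simp only [Fin.ext_iff, Fin.val_last]; split_ifs <;> omega

theorem finRotate_pow_val (n k : ℕ) (i : Fin (n + 1)) :
    (((finRotate (n + 1)) ^ k) i : ℕ) = ((i : ℕ) + k) % (n + 1) := by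
  induction k generalizing i with
  | zero => simp [Nat.mod_eq_of_lt i.isLt]
  | succ k ih =>
    rw [pow_succ, Equiv.Perm.mul_apply, ih (finRotate (n+1) i), finRotate_succ_apply,
      Fin.val_add_one]
    split_ifs with hl
    · have hv : (i : ℕ) = n := by rw [hl]; rfl
      rw [Nat.zero_add, show (i:ℕ) + (k+1) = (n+1) + k by omega, Nat.add_mod_left]
    · congr 1; omega

theorem blockFlipPerm_swap (m : ℕ) (h3 : m + 1 + 1 = m + 1 + 1) (h4 : m + 0 + 2 = m + 1 + 1) :
    blockFlipPerm (m+1) m 1 1 h3 =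
      blockFlipPerm (m+1) m 0 2 h4 *
        Equiv.swap (⟨m, by omega⟩ : Fin (m+1+1)) ⟨m+1, by omega⟩ := by
  ext i
  rw [Equiv.Perm.mul_apply]
  rcases eq_or_ne i ⟨m, by omega⟩ with rfl | h1
  · rw [Equiv.swap_apply_left, blockFlipPerm_apply_val, blockFlipPerm_apply_val]
    simp
  · rcases eq_or_ne i ⟨m+1, by omega⟩ with rfl | h2
    · rw [Equiv.swap_apply_right, blockFlipPerm_apply_val, blockFlipPerm_apply_val]
      simp
    · rw [Equiv.swap_apply_of_ne_of_ne h1 h2, blockFlipPerm_apply_val, blockFlipPerm_apply_val]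
      have hi := i.isLt
      simp [Fin.ext_iff] at h1 h2
      split_ifs <;> omega

theorem act_single (n : ℕ) (σ : Equiv.Perm (Fin (n+1))) (j : Fin (n+1))
    (v : Multiplicative (ZMod 2)) :
    signPermAction (n+1) σ (Pi.mulSingle j v) = Pi.mulSingle (σ j) v := by
  funext i
  simp [signPermAction, MulEquiv.arrowCongr, Pi.mulSingle_apply, Equiv.symm_apply_eq]

/-- The generating set of small-middle block flips. -/
def BFset (n : ℕ) : Set (HyperoctahedralGroup n) :=
  {x | ∃ (p q r : ℕ) (h : p + q + r = n + 1), q ≤ 1 ∧ x = blockFlip n p q r h}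

theorem inr_rot_eq (n : ℕ) (h : n + 0 + 1 = n + 1) :
    (SemidirectProduct.inr (finRotate (n+1)) : HyperoctahedralGroup n) =
      blockFlip n n 0 1 h := by
  refine SemidirectProduct.ext ?_ ?_
  · funext i
    have := i.isLt
    show (1 : Fin (n+1) → Multiplicative (ZMod 2)) i = _
    simp only [blockFlip, Pi.one_apply]
    rw [if_neg (by omega)]
  · show finRotate (n+1) = _
    exact (blockFlipPerm_rot n h).symm

theorem inr_rot_mem (n : ℕ) :
    (SemidirectProduct.inr (finRotate (n+1)) : HyperoctahedralGroup n)
      ∈ Subgroup.closure (BFset n) := by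
  rw [inr_rot_eq n (by omega)]
  exact Subgroup.subset_closure ⟨n, 0, 1, by omega, by omega, rfl⟩

theorem blockFlip_a_eq (n : ℕ) (h : n + 1 + 0 = n + 1) :
    blockFlip n n 1 0 h =
      SemidirectProduct.inl (Pi.mulSingle (Fin.last n) (Multiplicative.ofAdd (1 : ZMod 2))) *
        SemidirectProduct.inr (finRotate (n+1)) := by
  rw [← SemidirectProduct.mk_eq_inl_mul_inr]
  refine SemidirectProduct.ext ?_ ?_
  · show (fun i : Fin (n+1) =>
          if n ≤ (i:ℕ) ∧ (i:ℕ) < n + 1 then Multiplicative.ofAdd (1 : ZMod 2) else 1)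
        = Pi.mulSingle (Fin.last n) (Multiplicative.ofAdd (1 : ZMod 2))
    funext i
    have := i.isLt
    rw [Pi.mulSingle_apply]
    by_cases hi : i = Fin.last n
    · subst hi
      rw [if_pos (by simp [Fin.last]), if_pos rfl]
    · have hne : (i:ℕ) ≠ n := fun hh => hi (Fin.ext hh)
      rw [if_neg (by omega), if_neg hi]
  · exact blockFlipPerm_rot' n h

theorem inl_single_mem (n : ℕ) (j : Fin (n+1)) (v : Multiplicative (ZMod 2)) :
    (SemidirectProduct.inl (Pi.mulSingle j v) : HyperoctahedralGroup n)
      ∈ Subgroup.closure (BFset n) := by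
  have hv : v = 1 ∨ v = Multiplicative.ofAdd (1 : ZMod 2) := by revert v; decide
  rcases hv with rfl | rfl
  · rw [Pi.mulSingle_one, map_one]; exact one_mem _
  · have hlast : (SemidirectProduct.inl
        (Pi.mulSingle (Fin.last n) (Multiplicative.ofAdd (1 : ZMod 2))) :
        HyperoctahedralGroup n) ∈ Subgroup.closure (BFset n) := by
      have ha : blockFlip n n 1 0 (by omega) ∈ Subgroup.closure (BFset n) :=
        Subgroup.subset_closure ⟨n, 1, 0, by omega, by omega, rfl⟩
      have h2 := mul_mem ha (inv_mem (inr_rot_mem n))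
      rwa [blockFlip_a_eq n (by omega), mul_inv_cancel_right] at h2
    have key : ∀ k : ℕ, (SemidirectProduct.inl
        (Pi.mulSingle (((finRotate (n+1)) ^ k) (Fin.last n)) (Multiplicative.ofAdd (1 : ZMod 2))) :
        HyperoctahedralGroup n) ∈ Subgroup.closure (BFset n) := by
      intro k
      induction k with
      | zero => simpa using hlast
      | succ k ih =>
        have hstep : ((finRotate (n+1)) ^ (k+1)) (Fin.last n)
            = finRotate (n+1) (((finRotate (n+1)) ^ k) (Fin.last n)) := by
          rw [pow_succ']; rfl
        rw [hstep, ← act_single n, SemidirectProduct.inl_aut]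
        refine mul_mem (mul_mem (inr_rot_mem n) ih) ?_
        rw [map_inv]
        exact inv_mem (inr_rot_mem n)
    have hj : ((finRotate (n+1)) ^ ((j:ℕ) + 1)) (Fin.last n) = j := by
      apply Fin.ext
      rw [finRotate_pow_val]
      have hl : ((Fin.last n : Fin (n+1)) : ℕ) = n := rfl
      rw [hl, show n + ((j:ℕ)+1) = (n+1) + (j:ℕ) by omega, Nat.add_mod_left,
        Nat.mod_eq_of_lt j.isLt]
    rw [← hj]
    exact key _

theorem inl_mem (n : ℕ) (f : Fin (n+1) → Multiplicative (ZMod 2)) :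
    (SemidirectProduct.inl f : HyperoctahedralGroup n) ∈ Subgroup.closure (BFset n) := by
  have claim : ∀ l : List (Fin (n+1)),
      (SemidirectProduct.inl ((l.map (fun i => Pi.mulSingle i (f i))).prod) :
        HyperoctahedralGroup n) ∈ Subgroup.closure (BFset n) := by
    intro l
    induction l with
    | nil => rw [List.map_nil, List.prod_nil, map_one]; exact one_mem _
    | cons a t ih =>
      rw [List.map_cons, List.prod_cons, map_mul]
      exact mul_mem (inl_single_mem n a (f a)) ih
  rw [← Finset.univ_prod_mulSingle f, Fin.prod_univ_def]
  exact claim _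

theorem inr_mem (n : ℕ) : ∀ σ : Equiv.Perm (Fin (n+1)),
    (SemidirectProduct.inr σ : HyperoctahedralGroup n) ∈ Subgroup.closure (BFset n) := by
  cases n with
  | zero =>
    intro σ
    have hσ : σ = 1 := by
      ext x
      omega
    rw [hσ, map_one]; exact one_mem _
  | succ m =>
    intro σ
    have hd : (SemidirectProduct.inr (blockFlipPerm (m+1) m 0 2 (by omega)) :
        HyperoctahedralGroup (m+1)) ∈ Subgroup.closure (BFset (m+1)) := by
      apply Subgroup.subset_closure
      refine ⟨m, 0, 2, by omega, by omega, ?_⟩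
      refine SemidirectProduct.ext ?_ ?_
      · funext i
        have := i.isLt
        show (1 : Fin (m+1+1) → Multiplicative (ZMod 2)) i = _
        simp only [blockFlip, Pi.one_apply]
        rw [if_neg (by omega)]
      · rfl
    have hu : blockFlip (m+1) m 1 1 (by omega) ∈ Subgroup.closure (BFset (m+1)) :=
      Subgroup.subset_closure ⟨m, 1, 1, by omega, by omega, rfl⟩
    have hswap_eq : (SemidirectProduct.inr (blockFlipPerm (m+1) m 0 2 (by omega)) :
          HyperoctahedralGroup (m+1))⁻¹ * blockFlip (m+1) m 1 1 (by omega)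
        = (⟨signPermAction (m+1+1) (blockFlipPerm (m+1) m 0 2 (by omega))⁻¹
              ((blockFlip (m+1) m 1 1 (by omega)).left),
            Equiv.swap (⟨m, by omega⟩ : Fin (m+1+1)) ⟨m+1, by omega⟩⟩ :
            HyperoctahedralGroup (m+1)) := by
      refine SemidirectProduct.ext ?_ ?_
      · simp [SemidirectProduct.mul_left, SemidirectProduct.inv_left,
          SemidirectProduct.left_inr, SemidirectProduct.right_inr,
          SemidirectProduct.inv_right]
      · show (blockFlipPerm (m+1) m 0 2 (by omega))⁻¹ * blockFlipPerm (m+1) m 1 1 (by omega) = _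
        rw [blockFlipPerm_swap m (by omega) (by omega), inv_mul_cancel_left]
    have hsw : (SemidirectProduct.inr
          (Equiv.swap (⟨m, by omega⟩ : Fin (m+1+1)) ⟨m+1, by omega⟩) :
          HyperoctahedralGroup (m+1)) ∈ Subgroup.closure (BFset (m+1)) := by
      have h5 := mul_mem (inv_mem hd) hu
      rw [hswap_eq, SemidirectProduct.mk_eq_inl_mul_inr] at h5
      exact (mul_mem_cancel_left (inl_mem (m+1) _)).mp h5
    have hc : finRotate (m+1+1) (⟨m, by omega⟩ : Fin (m+1+1)) = ⟨m+1, by omega⟩ := by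
      rw [finRotate_succ_apply]
      apply Fin.ext
      rw [Fin.val_add_one]
      split_ifs with hh
      · exfalso
        have : m = m + 1 := congrArg Fin.val hh
        omega
      · rfl
    have hgen := Equiv.Perm.closure_cycle_adjacent_swap (isCycle_finRotate (n := m))
      (support_finRotate (n := m)) (⟨m, by omega⟩ : Fin (m+1+1))
    have hσ' : σ ∈ Subgroup.closure
        {finRotate (m+2), Equiv.swap (⟨m, by omega⟩ : Fin (m+1+1))
          (finRotate (m+2) ⟨m, by omega⟩)} := by
      rw [hgen]; trivial
    refine Subgroup.closure_induction ?_ ?_ ?_ ?_ hσ'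
    · intro τ hτ
      rcases hτ with rfl | rfl
      · exact inr_rot_mem (m+1)
      · rw [show (finRotate (m+2) : Equiv.Perm (Fin (m+1+1))) ⟨m, by omega⟩
            = (⟨m+1, by omega⟩ : Fin (m+1+1)) from hc]
        exact hsw
    · rw [map_one]; exact one_mem _
    · intro x y _ _ hx hy
      rw [map_mul]; exact mul_mem hx hy
    · intro x _ hx
      rw [map_inv]; exact inv_mem hx

/-- The hyperoctahedral group `H_{n+1}` is generated by the block-flip elements
`w_{p,q,r}` whose middle block has size at most one. -/
theorem hyperoctahedral_closure_blockFlips_small_middle (n : ℕ) :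
    Subgroup.closure
      {x : HyperoctahedralGroup n |
        ∃ (p q r : ℕ) (h : p + q + r = n + 1), q ≤ 1 ∧ x = blockFlip n p q r h} = ⊤ := by
  show Subgroup.closure (BFset n) = ⊤
  rw [Subgroup.eq_top_iff']
  intro x
  rw [← SemidirectProduct.inl_left_mul_inr_right x]
  exact mul_mem (inl_mem n x.left) (inr_mem n x.right)
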